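/- Let p be an odd prime, r ≥ 1, R = ℤ/p^rℤ, and ζ a primitive p^r-th root of unity. Let A ⊆ R \ {0}. Then {ζ^a : a ∈ A} is a ℤ-basis of ℤ[ζ] if and only if the canonical projection π : R → ℤ/p^{r-1}ℤ restricts to a bijection from the complement of A in R onto ℤ/p^{r-1}ℤ. -/

import Mathlib

lemma aux_pow_mod {ζ : ℂ} {n : ℕ} (h1 : ζ ^ n = 1) (m : ℕ) : ζ ^ (m % n) = ζ ^ m := by
  conv_rhs => rw [← Nat.div_add_mod m n, pow_add, pow_mul, h1, one_pow, one_mul]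

lemma aux_pow_natCast {ζ : ℂ} {n : ℕ} [NeZero n] (h1 : ζ ^ n = 1) (m : ℕ) :
    ζ ^ ((m : ZMod n)).val = ζ ^ m := by
  rw [ZMod.val_natCast, aux_pow_mod h1]

lemma aux_pow_add {ζ : ℂ} {n : ℕ} [NeZero n] (h1 : ζ ^ n = 1) (x y : ZMod n) :
    ζ ^ ((x + y).val) = ζ ^ x.val * ζ ^ y.val := by
  rw [ZMod.val_add, aux_pow_mod h1, pow_add]

lemma aux_npow {p r : ℕ} (hr : 1 ≤ r) : p ^ r = p ^ (r - 1) * p := by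
  conv_lhs => rw [← Nat.sub_add_cancel hr, pow_succ]

lemma aux_fiber_sum {p r : ℕ} (hp : p.Prime) (hr : 1 ≤ r) {ζ : ℂ}
    (hζ : IsPrimitiveRoot ζ (p ^ r)) [NeZero (p ^ r)] (c : ZMod (p ^ r)) :
    ∑ k ∈ Finset.range p, ζ ^ ((c + ((k * p ^ (r - 1) : ℕ) : ZMod (p ^ r))).val) = 0 := by
  have h1 : ζ ^ (p ^ r) = 1 := hζ.pow_eq_one
  have hη : IsPrimitiveRoot (ζ ^ (p ^ (r - 1))) p :=
    hζ.pow (pow_pos hp.pos r) (aux_npow hr)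
  calc ∑ k ∈ Finset.range p, ζ ^ ((c + ((k * p ^ (r - 1) : ℕ) : ZMod (p ^ r))).val)
      = ∑ k ∈ Finset.range p, ζ ^ c.val * (ζ ^ (p ^ (r - 1))) ^ k := by
        refine Finset.sum_congr rfl fun k _ => ?_
        rw [aux_pow_add h1, aux_pow_natCast h1, mul_comm k, pow_mul, ← pow_mul, mul_comm (p^(r-1))]
    _ = ζ ^ c.val * ∑ k ∈ Finset.range p, (ζ ^ (p ^ (r - 1))) ^ k := by rw [Finset.mul_sum]
    _ = 0 := by rw [hη.geom_sum_eq_zero hp.one_lt, mul_zero]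

lemma aux_ker {p r : ℕ} (hp : p.Prime) (hr : 1 ≤ r)
    (π : ZMod (p ^ r) →+* ZMod (p ^ (r - 1)))
    (hπ : ∀ m : ℕ, π (m : ZMod (p ^ r)) = (m : ZMod (p ^ (r - 1))))
    (y : ZMod (p ^ r)) (hy : π y = 0) :
    ∃ k < p, y = ((k * p ^ (r - 1) : ℕ) : ZMod (p ^ r)) := by
  haveI : NeZero (p ^ r) := ⟨pow_ne_zero _ hp.pos.ne'⟩
  haveI : NeZero (p ^ (r - 1)) := ⟨pow_ne_zero _ hp.pos.ne'⟩
  have h1 : ((y.val : ℕ) : ZMod (p ^ (r - 1))) = 0 := by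
    rw [← hπ, ZMod.natCast_rightInverse y, hy]
  rw [ZMod.natCast_eq_zero_iff] at h1
  obtain ⟨k, hk⟩ := h1
  refine ⟨k, ?_, ?_⟩
  · have := y.val_lt
    rw [hk, aux_npow hr] at this
    exact lt_of_mul_lt_mul_left this (Nat.zero_le _)
  · rw [mul_comm, ← hk, ZMod.natCast_rightInverse y]

lemma aux_fiber {p r : ℕ} (hp : p.Prime) (hr : 1 ≤ r)
    (π : ZMod (p ^ r) →+* ZMod (p ^ (r - 1)))
    (hπ : ∀ m : ℕ, π (m : ZMod (p ^ r)) = (m : ZMod (p ^ (r - 1))))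
    (c x : ZMod (p ^ r)) (hx : π x = π c) :
    ∃ k < p, x = c + ((k * p ^ (r - 1) : ℕ) : ZMod (p ^ r)) := by
  obtain ⟨k, hk, h⟩ := aux_ker hp hr π hπ (x - c) (by rw [map_sub, hx, sub_self])
  exact ⟨k, hk, by rw [← h]; ring⟩

lemma aux_pi_add {p r : ℕ} (hp : p.Prime) (hr : 1 ≤ r)
    (π : ZMod (p ^ r) →+* ZMod (p ^ (r - 1)))
    (hπ : ∀ m : ℕ, π (m : ZMod (p ^ r)) = (m : ZMod (p ^ (r - 1))))
    (c : ZMod (p ^ r)) (k : ℕ) :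
    π (c + ((k * p ^ (r - 1) : ℕ) : ZMod (p ^ r))) = π c := by
  haveI : NeZero (p ^ (r - 1)) := ⟨pow_ne_zero _ hp.pos.ne'⟩
  have h0 : ((k * p ^ (r - 1) : ℕ) : ZMod (p ^ (r - 1))) = 0 := by
    rw [ZMod.natCast_eq_zero_iff]; exact dvd_mul_left _ _
  rw [map_add, hπ, h0, add_zero]

lemma aux_inj {p r : ℕ} (hp : p.Prime) (hr : 1 ≤ r) (c : ZMod (p ^ r))
    {k₁ k₂ : ℕ} (h₁ : k₁ < p) (h₂ : k₂ < p)
    (h : c + ((k₁ * p ^ (r - 1) : ℕ) : ZMod (p ^ r)) = c + ((k₂ * p ^ (r - 1) : ℕ) : ZMod (p ^ r))) :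
    k₁ = k₂ := by
  have h' := add_left_cancel h
  rw [ZMod.natCast_eq_natCast_iff] at h'
  have hlt : ∀ k, k < p → k * p ^ (r - 1) < p ^ r := fun k hk =>
    calc k * p ^ (r - 1) < p * p ^ (r - 1) := Nat.mul_lt_mul_of_pos_right hk (pow_pos hp.pos _)
    _ = p ^ r := by rw [aux_npow hr, mul_comm]
  have := (Nat.ModEq.eq_of_lt_of_lt h' (hlt _ h₁) (hlt _ h₂))
  exact Nat.eq_of_mul_eq_mul_right (pow_pos hp.pos _) this

lemma aux_shift_ne {p r : ℕ} (hp : p.Prime) (hr : 1 ≤ r) {k : ℕ} (hk0 : 0 < k) (hk : k < p) :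
    ((k * p ^ (r - 1) : ℕ) : ZMod (p ^ r)) ≠ 0 := by
  haveI : NeZero (p ^ r) := ⟨pow_ne_zero _ hp.pos.ne'⟩
  rw [Ne, ZMod.natCast_eq_zero_iff]
  intro hdvd
  have h1 : k * p ^ (r - 1) < p ^ r :=
    calc k * p ^ (r - 1) < p * p ^ (r - 1) := Nat.mul_lt_mul_of_pos_right hk (pow_pos hp.pos _)
    _ = p ^ r := by rw [aux_npow hr, mul_comm]
  have h2 : 0 < k * p ^ (r - 1) := Nat.mul_pos hk0 (pow_pos hp.pos _)
  exact absurd (Nat.le_of_dvd h2 hdvd) (not_le_of_gt h1)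

lemma aux_span_all {ζ : ℂ} {n : ℕ} [NeZero n] (h1 : ζ ^ n = 1) :
    Subalgebra.toSubmodule (Algebra.adjoin ℤ ({ζ} : Set ℂ)) =
      Submodule.span ℤ (Set.range fun a : ZMod n => ζ ^ a.val) := by
  apply le_antisymm
  · intro x hx
    rw [Subalgebra.mem_toSubmodule, Algebra.adjoin_singleton_eq_range_aeval] at hx
    obtain ⟨P, rfl⟩ := hx
    show (Polynomial.aeval ζ) P ∈ _
    rw [Polynomial.aeval_eq_sum_range]
    refine Submodule.sum_mem _ fun i _ => Submodule.smul_mem _ _ ?_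
    refine Submodule.subset_span ⟨(i : ZMod n), ?_⟩
    exact aux_pow_natCast h1 i
  · rw [Submodule.span_le]
    rintro x ⟨a, rfl⟩
    rw [SetLike.mem_coe, Subalgebra.mem_toSubmodule]
    exact Subalgebra.pow_mem _ (Algebra.subset_adjoin (Set.mem_singleton ζ)) _

set_option maxHeartbeats 1000000 in
set_option synthInstance.maxHeartbeats 400000 in
/-- Let `p` be an odd prime, `r ≥ 1`, `R = ℤ/p^rℤ` and `ζ` a primitive
`p^r`-th root of unity. For `A ⊆ R \ {0}`, the family `{ζ^a : a ∈ A}` is a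
`ℤ`-basis of `ℤ[ζ]` if and only if the canonical projection `π : R → ℤ/p^(r−1)ℤ`
restricts to a bijection from the complement of `A` onto `ℤ/p^(r−1)ℤ`. -/
theorem stmt1 (p r : ℕ) (hp : p.Prime) (hodd : Odd p) (hr : 1 ≤ r)
    (ζ : ℂ) (hζ : IsPrimitiveRoot ζ (p ^ r))
    (A : Set (ZMod (p ^ r))) (hA : (0 : ZMod (p ^ r)) ∉ A) :
    (LinearIndependent ℤ (fun a : A => ζ ^ (a : ZMod (p ^ r)).val) ∧
      Submodule.span ℤ ((fun a : ZMod (p ^ r) => ζ ^ a.val) '' A) =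
        Subalgebra.toSubmodule (Algebra.adjoin ℤ ({ζ} : Set ℂ))) ↔
    Set.BijOn (ZMod.castHom (pow_dvd_pow p (Nat.sub_le r 1)) (ZMod (p ^ (r - 1))))
      Aᶜ Set.univ := by
  classical
  haveI : NeZero (p ^ r) := ⟨pow_ne_zero _ hp.pos.ne'⟩
  haveI : NeZero (p ^ (r - 1)) := ⟨pow_ne_zero _ hp.pos.ne'⟩
  have hn : 0 < p ^ r := pow_pos hp.pos r
  have h1 : ζ ^ (p ^ r) = 1 := hζ.pow_eq_one
  set π := ZMod.castHom (pow_dvd_pow p (Nat.sub_le r 1)) (ZMod (p ^ (r - 1))) with hπdef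
  have hπ : ∀ m : ℕ, π (m : ZMod (p ^ r)) = (m : ZMod (p ^ (r - 1))) := fun m => map_natCast π m
  have hint : IsIntegral ℤ ζ := hζ.isIntegral hn
  set M := Algebra.adjoin ℤ ({ζ} : Set ℂ) with hMdef
  let pb : PowerBasis ℤ M := Algebra.adjoin.powerBasis' hint
  haveI : Module.Finite ℤ M := Module.Finite.of_basis pb.basis
  have hdim : pb.dim = p ^ (r - 1) * (p - 1) := by
    rw [Algebra.adjoin.powerBasis'_dim, ← Polynomial.cyclotomic_eq_minpoly hζ hn,
      Polynomial.natDegree_cyclotomic, Nat.totient_prime_pow hp (by omega)]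
  have hmem : ∀ a : ZMod (p ^ r), ζ ^ a.val ∈ M :=
    fun a => Subalgebra.pow_mem _ (Algebra.subset_adjoin (Set.mem_singleton ζ)) _
  set v : A → M := fun a => ⟨ζ ^ (a : ZMod (p ^ r)).val, hmem _⟩ with hvdef
  haveI : Fintype A := Fintype.ofFinite _
  haveI : Fintype ↥(Aᶜ) := Fintype.ofFinite _
  -- card relation
  have hcards : Nat.card A + Nat.card ↥(Aᶜ) = p ^ r := by
    rw [Nat.card_coe_set_eq, Nat.card_coe_set_eq, Set.ncard_add_ncard_compl,
      Nat.card_eq_fintype_card, ZMod.card]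
  -- image transfer
  have himg : (⇑(Subalgebra.toSubmodule M).subtype '' Set.range v) =
      (fun a : ZMod (p ^ r) => ζ ^ a.val) '' A := by
    ext x
    constructor
    · rintro ⟨-, ⟨a, rfl⟩, rfl⟩
      exact ⟨a, a.2, rfl⟩
    · rintro ⟨a, ha, rfl⟩
      exact ⟨v ⟨a, ha⟩, ⟨⟨a, ha⟩, rfl⟩, rfl⟩
  -- span transfer
  have hspan_iff : Submodule.span ℤ ((fun a : ZMod (p ^ r) => ζ ^ a.val) '' A)
      = Subalgebra.toSubmodule M ↔ Submodule.span ℤ (Set.range v) = ⊤ := by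
    constructor
    · intro h
      apply Submodule.map_injective_of_injective (Submodule.injective_subtype
        (Subalgebra.toSubmodule M))
      rw [Submodule.map_span, Submodule.map_top, Submodule.range_subtype, himg, h]
    · intro h
      have := congrArg (Submodule.map (Subalgebra.toSubmodule M).subtype) h
      rwa [Submodule.map_span, Submodule.map_top, Submodule.range_subtype, himg] at this
  constructor
  · rintro ⟨hLI, hsp⟩
    -- linear independence downstairs
    have hvLI : LinearIndependent ℤ v := LinearIndependent.of_comp
      (Subalgebra.toSubmodule M).subtype hLI
    have hvSP : Submodule.span ℤ (Set.range v) = ⊤ := hspan_iff.mp hsp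
    let B : Module.Basis A ℤ M := Module.Basis.mk hvLI hvSP.ge
    have hcardA : Nat.card A = pb.dim := by
      rw [Nat.card_eq_fintype_card, ← Module.finrank_eq_card_basis B, pb.finrank]
    have hcardAc : Nat.card ↥(Aᶜ) = p ^ (r - 1) := by
      have h2 : p ^ r = p ^ (r - 1) * p := aux_npow hr
      have h3 : p ^ (r - 1) * (p - 1) = p ^ (r - 1) * p - p ^ (r - 1) := by
        rw [Nat.mul_sub, mul_one]
      rw [hdim] at hcardA
      have h5 := Nat.eq_sub_of_add_eq' hcards
      rw [hcardA] at h5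
      rw [h5, h2, h3]
      exact Nat.sub_sub_self (Nat.le_mul_of_pos_right _ hp.pos)
    -- surjectivity of restriction
    have hsurj : Function.Surjective ((Aᶜ).restrict π) := by
      intro b
      by_contra hcon
      push_neg at hcon
      set c : ZMod (p ^ r) := ((b.val : ℕ) : ZMod (p ^ r)) with hcdef
      have hπc : π c = b := by rw [hπ, ZMod.natCast_rightInverse b]
      have hfib : ∀ k : ℕ, k < p → c + ((k * p ^ (r - 1) : ℕ) : ZMod (p ^ r)) ∈ A := by
        intro k hk
        by_contra hxA
        exact hcon ⟨_, hxA⟩ (by show π _ = b; rw [aux_pi_add hp hr π hπ, hπc])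
      let j : Fin p → A := fun k => ⟨c + ((k.val * p ^ (r - 1) : ℕ) : ZMod (p ^ r)),
        hfib k.val k.isLt⟩
      have hjinj : Function.Injective j := fun k₁ k₂ h =>
        Fin.ext (aux_inj hp hr c k₁.isLt k₂.isLt (Subtype.ext_iff.mp h))
      let g : A → ℤ := fun a => if a ∈ Finset.image j Finset.univ then 1 else 0
      have hgsum : ∑ a : A, g a • ζ ^ ((a : ZMod (p ^ r)).val) = 0 := by
        simp only [g, ite_smul, one_smul, zero_smul]
        rw [Finset.sum_ite_mem, Finset.univ_inter,
          Finset.sum_image (fun a _ b _ h => hjinj h)]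
        calc ∑ k : Fin p, ζ ^ (((j k : A) : ZMod (p ^ r)).val)
            = ∑ k ∈ Finset.range p, ζ ^ ((c + ((k * p ^ (r - 1) : ℕ) : ZMod (p ^ r))).val) :=
              Fin.sum_univ_eq_sum_range
                (fun t => ζ ^ ((c + ((t * p ^ (r - 1) : ℕ) : ZMod (p ^ r))).val)) p
          _ = 0 := aux_fiber_sum hp hr hζ c
      have := Fintype.linearIndependent_iff.mp hLI g hgsum (j ⟨0, hp.pos⟩)
      have hone : g (j ⟨0, hp.pos⟩) = 1 := by
        simp only [g, if_pos (Finset.mem_image_of_mem j (Finset.mem_univ _))]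
      rw [hone] at this
      exact one_ne_zero this
    refine ⟨Set.mapsTo_univ _ _, ?_, ?_⟩
    · apply Set.injOn_iff_injective.mpr
      have hbij : Function.Bijective ((Aᶜ).restrict π) := by
        rw [Fintype.bijective_iff_surjective_and_card]
        refine ⟨hsurj, ?_⟩
        rw [← Nat.card_eq_fintype_card, ← Nat.card_eq_fintype_card, hcardAc,
          Nat.card_eq_fintype_card, ZMod.card]
      exact hbij.injective
    · rw [Set.surjOn_iff_surjective]
      exact hsurj
  · intro hbij
    have hcardAc : Nat.card ↥(Aᶜ) = p ^ (r - 1) := by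
      have e1 : ↥(Aᶜ) ≃ ZMod (p ^ (r - 1)) :=
        (hbij.equiv π).trans (Equiv.Set.univ _)
      rw [Nat.card_congr e1, Nat.card_eq_fintype_card, ZMod.card]
    have hcardA : Nat.card A = pb.dim := by
      have h2 : p ^ r = p ^ (r - 1) * p := aux_npow hr
      have h3 : p ^ (r - 1) * (p - 1) = p ^ (r - 1) * p - p ^ (r - 1) := by
        rw [Nat.mul_sub, mul_one]
      have h5 := Nat.eq_sub_of_add_eq hcards
      rw [hcardAc] at h5
      rw [hdim, h5, h2, h3]
    -- span
    have hsp : Submodule.span ℤ ((fun a : ZMod (p ^ r) => ζ ^ a.val) '' A)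
        = Subalgebra.toSubmodule M := by
      apply le_antisymm
      · rw [Submodule.span_le]
        rintro x ⟨a, ha, rfl⟩
        rw [SetLike.mem_coe, Subalgebra.mem_toSubmodule]
        exact hmem a
      · rw [aux_span_all (n := p ^ r) h1, Submodule.span_le]
        rintro x ⟨c, rfl⟩
        show ζ ^ c.val ∈ _
        by_cases hc : c ∈ A
        · exact Submodule.subset_span ⟨c, hc, rfl⟩
        · -- c ∈ Aᶜ : use the fiber relation
          have hsum := aux_fiber_sum hp hr hζ c
          obtain ⟨m, hm⟩ : ∃ m, p = m + 1 := ⟨p - 1, by have := hp.pos; omega⟩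
          have hsum' := Finset.sum_range_succ'
            (fun t => ζ ^ ((c + ((t * p ^ (r - 1) : ℕ) : ZMod (p ^ r))).val)) m
          rw [← hm] at hsum'
          simp only [Nat.zero_mul, Nat.cast_zero, add_zero] at hsum'
          have hc0 : ζ ^ c.val =
              -∑ k ∈ Finset.range m, ζ ^ ((c + (((k + 1) * p ^ (r - 1) : ℕ) :
                ZMod (p ^ r))).val) := by linear_combination hsum - hsum'
          rw [hc0]
          refine Submodule.neg_mem _ (Submodule.sum_mem _ fun k hk => ?_)
          have hkA : c + (((k + 1) * p ^ (r - 1) : ℕ) : ZMod (p ^ r)) ∈ A := by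
            by_contra hx
            have heq : c + (((k + 1) * p ^ (r - 1) : ℕ) : ZMod (p ^ r)) = c :=
              hbij.injOn hx hc (by rw [aux_pi_add hp hr π hπ])
            have : (((k + 1) * p ^ (r - 1) : ℕ) : ZMod (p ^ r)) = 0 :=
              add_eq_left.mp heq
            have hk' := Finset.mem_range.mp hk
            exact aux_shift_ne hp hr (Nat.succ_pos k) (by omega : k + 1 < p) this
          exact Submodule.subset_span ⟨_, hkA, rfl⟩
    refine ⟨?_, hsp⟩
    -- linear independence
    have hvSP : Submodule.span ℤ (Set.range v) = ⊤ := hspan_iff.mp hsp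
    let e : A ≃ Fin pb.dim :=
      Fintype.equivFinOfCardEq (by rw [← Nat.card_eq_fintype_card, hcardA])
    let B : Module.Basis A ℤ M := pb.basis.reindex e.symm
    let f : M →ₗ[ℤ] M := B.constr ℤ v
    have hfsurj : Function.Surjective f := by
      rw [← LinearMap.range_eq_top, B.constr_range, hvSP]
    have hfinj : Function.Injective f :=
      OrzechProperty.injective_of_surjective_endomorphism f hfsurj
    have hvLI : LinearIndependent ℤ v := by
      have hB := B.linearIndependent
      have := hB.map' f (LinearMap.ker_eq_bot.mpr hfinj)
      have hfB : (f ∘ B) = v := funext fun a => B.constr_basis ℤ v a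
      rwa [hfB] at this
    have := hvLI.map' (Subalgebra.toSubmodule M).subtype (Submodule.ker_subtype _)
    exact this
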